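/- arXiv:2309.17289 — 6 statements merged into one kernel-verified Lean document; each statement's English description precedes it below -/
import Mathlib

section
/- Let b > 1, c > 0, and 0 < a < b^b c^{b+1}/(b+1)^{b+1}, and let φ₁ ∈ (0, c/(b+1)) and φ₂ ∈ (c/(b+1), c) be the two roots of g(φ) = φ(c − φ)^b − a in (−∞, c). Define V(φ) = −φ²/2 + a/((b−1)(c−φ)^{b−1}) for φ < c. Then V'(φ) = −g(φ)/(c − φ)^b for all φ < c, V attains a strict local maximum at φ₁, and V attains a strict local minimum at φ₂. -/
open Real

private lemma g_hasDeriv (b c : ℝ) (s : ℝ) (hs : s < c) :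
    HasDerivAt (fun t : ℝ => t * (c - t) ^ b) ((c - s) ^ (b - 1) * (c - (b + 1) * s)) s := by
  have hx : 0 < c - s := by linarith
  have hcs : HasDerivAt (fun t : ℝ => c - t) (-1) s := (hasDerivAt_id s).const_sub c
  have hr : HasDerivAt (fun x : ℝ => x ^ b) (b * (c - s) ^ (b - 1)) (c - s) :=
    Real.hasDerivAt_rpow_const (Or.inl hx.ne')
  have hcomp : HasDerivAt (fun t : ℝ => (c - t) ^ b) (b * (c - s) ^ (b - 1) * (-1)) s :=
    hr.comp s hcs
  have h := (hasDerivAt_id s).mul hcomp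
  refine h.congr_deriv ?_
  have e : (c - s) ^ b = (c - s) ^ (b - 1) * (c - s) := by
    rw [← Real.rpow_add_one hx.ne' (b - 1)]; congr 1; ring
  simp only [id_eq]
  rw [e]; ring

private lemma V_hasDeriv (b c a : ℝ) (hb : 1 < b) (s : ℝ) (hs : s < c) :
    HasDerivAt (fun t : ℝ => -t ^ 2 / 2 + a / ((b - 1) * (c - t) ^ (b - 1)))
      (-(s * (c - s) ^ b - a) / (c - s) ^ b) s := by
  have hx : 0 < c - s := by linarith
  have hb1 : b - 1 ≠ 0 := by intro h; nlinarith
  have hcs : HasDerivAt (fun t : ℝ => c - t) (-1) s := (hasDerivAt_id s).const_sub c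
  have hr : HasDerivAt (fun x : ℝ => x ^ (b - 1)) ((b - 1) * (c - s) ^ (b - 1 - 1)) (c - s) :=
    Real.hasDerivAt_rpow_const (Or.inl hx.ne')
  have hcomp : HasDerivAt (fun t : ℝ => (c - t) ^ (b - 1))
      ((b - 1) * (c - s) ^ (b - 1 - 1) * (-1)) s := hr.comp s hcs
  have hu : HasDerivAt (fun t : ℝ => (b - 1) * (c - t) ^ (b - 1))
      ((b - 1) * ((b - 1) * (c - s) ^ (b - 1 - 1) * (-1))) s := hcomp.const_mul _
  have hune : (b - 1) * (c - s) ^ (b - 1) ≠ 0 := by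
    have := Real.rpow_pos_of_pos hx (b - 1)
    positivity
  have hdiv := (hasDerivAt_const s a).div hu hune
  have hp1 : HasDerivAt (fun t : ℝ => -t ^ 2 / 2) (-(↑2 * s ^ 1) / 2) s :=
    ((hasDerivAt_pow 2 s).neg).div_const 2
  have h := hp1.add hdiv
  refine h.congr_deriv ?_
  have hy : 0 < (c - s) ^ (b - 2) := Real.rpow_pos_of_pos hx _
  have e1 : (c - s) ^ (b - 1) = (c - s) ^ (b - 2) * (c - s) := by
    rw [← Real.rpow_add_one hx.ne' (b - 2)]; congr 1; ring
  have e2 : (c - s) ^ b = (c - s) ^ (b - 2) * (c - s) * (c - s) := by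
    rw [← Real.rpow_add_one hx.ne' (b - 2), ← Real.rpow_add_one hx.ne']; congr 1; ring
  have e3 : b - 1 - 1 = b - 2 := by ring
  rw [e3, e2, e1]
  field_simp
  ring

/-- With `φ₁ ∈ (0, c/(b+1))` and `φ₂ ∈ (c/(b+1), c)` the two roots of
`g(φ) = φ(c-φ)^b - a` below `c`, the potential `V(φ) = -φ²/2 + a/((b-1)(c-φ)^(b-1))`
satisfies `V' = -g/(c-φ)^b` on `(-∞, c)`, has a strict local maximum at `φ₁`,
and a strict local minimum at `φ₂`. -/
theorem stmt5 (b c a : ℝ) (hb : 1 < b) (hc : 0 < c)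
    (ha : 0 < a) (ha' : a < b ^ b * c ^ (b + 1) / (b + 1) ^ (b + 1))
    (φ₁ φ₂ : ℝ) (h1 : φ₁ ∈ Set.Ioo (0 : ℝ) (c / (b + 1)))
    (h2 : φ₂ ∈ Set.Ioo (c / (b + 1)) c)
    (hr1 : φ₁ * (c - φ₁) ^ b - a = 0) (hr2 : φ₂ * (c - φ₂) ^ b - a = 0) :
    (∀ s : ℝ, s < c →
      deriv (fun t : ℝ => -t ^ 2 / 2 + a / ((b - 1) * (c - t) ^ (b - 1))) s
        = -(s * (c - s) ^ b - a) / (c - s) ^ b) ∧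
    (∃ ε > (0 : ℝ), ∀ s : ℝ, s ≠ φ₁ → |s - φ₁| < ε →
      -s ^ 2 / 2 + a / ((b - 1) * (c - s) ^ (b - 1))
        < -φ₁ ^ 2 / 2 + a / ((b - 1) * (c - φ₁) ^ (b - 1))) ∧
    (∃ ε > (0 : ℝ), ∀ s : ℝ, s ≠ φ₂ → |s - φ₂| < ε →
      -φ₂ ^ 2 / 2 + a / ((b - 1) * (c - φ₂) ^ (b - 1))
        < -s ^ 2 / 2 + a / ((b - 1) * (c - s) ^ (b - 1))) := by
  obtain ⟨h10, h11⟩ := h1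
  obtain ⟨h20, h21⟩ := h2
  set V : ℝ → ℝ := fun t : ℝ => -t ^ 2 / 2 + a / ((b - 1) * (c - t) ^ (b - 1)) with hVdef
  set G : ℝ → ℝ := fun t : ℝ => t * (c - t) ^ b with hGdef
  have hb1 : (0 : ℝ) < b + 1 := by linarith
  have hcb : 0 < c / (b + 1) := div_pos hc hb1
  have hcbc : c / (b + 1) < c := by
    rw [div_lt_iff₀ hb1]; nlinarith
  -- continuity of V on sets below c
  have hVcont : ∀ x y : ℝ, y < c → ContinuousOn V (Set.Icc x y) := by
    intro x y hy
    intro t ht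
    exact (V_hasDeriv b c a hb t (lt_of_le_of_lt ht.2 hy)).continuousAt.continuousWithinAt
  -- G is strictly monotone on [0, c/(b+1)]
  have hGcont : Continuous G := by
    apply continuous_id.mul
    apply Continuous.rpow_const (continuous_const.sub continuous_id)
    intro x; right; linarith
  have hGmono : StrictMonoOn G (Set.Icc 0 (c / (b + 1))) := by
    apply strictMonoOn_of_deriv_pos (convex_Icc _ _) hGcont.continuousOn
    intro t ht
    rw [interior_Icc] at ht
    have htc : t < c := lt_trans ht.2 hcbc
    rw [(g_hasDeriv b c t htc).deriv]
    have h1' : 0 < (c - t) ^ (b - 1) := Real.rpow_pos_of_pos (by linarith) _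
    have h2' : 0 < c - (b + 1) * t := by
      have := (lt_div_iff₀ hb1).mp ht.2
      linarith
    positivity
  -- G is strictly antitone on [c/(b+1), c]
  have hGanti : StrictAntiOn G (Set.Icc (c / (b + 1)) c) := by
    apply strictAntiOn_of_deriv_neg (convex_Icc _ _) hGcont.continuousOn
    intro t ht
    rw [interior_Icc] at ht
    rw [(g_hasDeriv b c t ht.2).deriv]
    have h1' : 0 < (c - t) ^ (b - 1) := Real.rpow_pos_of_pos (by linarith [ht.2]) _
    have h2' : c - (b + 1) * t < 0 := by
      have := (div_lt_iff₀ hb1).mp ht.1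
      linarith
    exact mul_neg_of_pos_of_neg h1' h2'
  refine ⟨fun s hs => (V_hasDeriv b c a hb s hs).deriv, ?_, ?_⟩
  · -- strict local max at φ₁
    refine ⟨min φ₁ (c / (b + 1) - φ₁), by simp [h10, h11, sub_pos], ?_⟩
    intro s hsne hsd
    rw [abs_lt] at hsd
    have hs0 : 0 < s := by
      have := hsd.1
      have h' : min φ₁ (c / (b + 1) - φ₁) ≤ φ₁ := min_le_left _ _
      linarith
    have hs1 : s < c / (b + 1) := by
      have := hsd.2
      have h' : min φ₁ (c / (b + 1) - φ₁) ≤ c / (b + 1) - φ₁ := min_le_right _ _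
      linarith
    rcases lt_or_gt_of_ne hsne with hlt | hgt
    · -- s < φ₁ : V strictly increasing on [s, φ₁]
      have hmono : StrictMonoOn V (Set.Icc s φ₁) := by
        apply strictMonoOn_of_deriv_pos (convex_Icc _ _) (hVcont s φ₁ (lt_trans h11 hcbc))
        intro t ht
        rw [interior_Icc] at ht
        have htc : t < c := by linarith [ht.2, h11, hcbc]
        rw [(V_hasDeriv b c a hb t htc).deriv]
        have hgneg : G t < G φ₁ :=
          hGmono ⟨by linarith [ht.1], by linarith [ht.2, h11.le]⟩
            ⟨h10.le, h11.le⟩ ht.2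
        have hGφ : G φ₁ = a := by simpa [hGdef] using sub_eq_zero.mp hr1
        have hnum : 0 < -(t * (c - t) ^ b - a) := by
          simp only [hGdef] at hgneg hGφ
          linarith [hgneg, hGφ]
        have hden : 0 < (c - t) ^ b := Real.rpow_pos_of_pos (by linarith) _
        positivity
      exact hmono (Set.left_mem_Icc.mpr hlt.le) (Set.right_mem_Icc.mpr hlt.le) hlt
    · -- φ₁ < s : V strictly decreasing on [φ₁, s]
      have hanti : StrictAntiOn V (Set.Icc φ₁ s) := by
        apply strictAntiOn_of_deriv_neg (convex_Icc _ _) (hVcont φ₁ s (lt_trans hs1 hcbc))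
        intro t ht
        rw [interior_Icc] at ht
        have htc : t < c := by linarith [ht.2, hs1, hcbc]
        rw [(V_hasDeriv b c a hb t htc).deriv]
        have hgpos : G φ₁ < G t :=
          hGmono ⟨h10.le, h11.le⟩
            ⟨by linarith [ht.1, h10], by linarith [ht.2, hs1]⟩ ht.1
        have hGφ : G φ₁ = a := by simpa [hGdef] using sub_eq_zero.mp hr1
        have hnum : -(t * (c - t) ^ b - a) < 0 := by
          simp only [hGdef] at hgpos hGφ
          linarith [hgpos, hGφ]
        have hden : 0 < (c - t) ^ b := Real.rpow_pos_of_pos (by linarith) _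
        exact div_neg_of_neg_of_pos hnum hden
      exact hanti (Set.left_mem_Icc.mpr hgt.le) (Set.right_mem_Icc.mpr hgt.le) hgt
  · -- strict local min at φ₂
    refine ⟨min (φ₂ - c / (b + 1)) (c - φ₂), by simp [h20, h21, sub_pos], ?_⟩
    intro s hsne hsd
    rw [abs_lt] at hsd
    have hs0 : c / (b + 1) < s := by
      have := hsd.1
      have h' : min (φ₂ - c / (b + 1)) (c - φ₂) ≤ φ₂ - c / (b + 1) := min_le_left _ _
      linarith
    have hs1 : s < c := by
      have := hsd.2
      have h' : min (φ₂ - c / (b + 1)) (c - φ₂) ≤ c - φ₂ := min_le_right _ _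
      linarith
    have hGφ : G φ₂ = a := by simpa [hGdef] using sub_eq_zero.mp hr2
    rcases lt_or_gt_of_ne hsne with hlt | hgt
    · -- s < φ₂ : V strictly decreasing on [s, φ₂]
      have hanti : StrictAntiOn V (Set.Icc s φ₂) := by
        apply strictAntiOn_of_deriv_neg (convex_Icc _ _) (hVcont s φ₂ h21)
        intro t ht
        rw [interior_Icc] at ht
        have htc : t < c := by linarith [ht.2, h21]
        rw [(V_hasDeriv b c a hb t htc).deriv]
        have hgpos : G φ₂ < G t :=
          hGanti ⟨by linarith [ht.1, hs0], by linarith [ht.2, h21]⟩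
            ⟨h20.le, h21.le⟩ ht.2
        have hnum : -(t * (c - t) ^ b - a) < 0 := by
          simp only [hGdef] at hgpos hGφ
          linarith [hgpos, hGφ]
        have hden : 0 < (c - t) ^ b := Real.rpow_pos_of_pos (by linarith) _
        exact div_neg_of_neg_of_pos hnum hden
      exact hanti (Set.left_mem_Icc.mpr hlt.le) (Set.right_mem_Icc.mpr hlt.le) hlt
    · -- φ₂ < s : V strictly increasing on [φ₂, s]
      have hmono : StrictMonoOn V (Set.Icc φ₂ s) := by
        apply strictMonoOn_of_deriv_pos (convex_Icc _ _) (hVcont φ₂ s hs1)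
        intro t ht
        rw [interior_Icc] at ht
        have htc : t < c := by linarith [ht.2, hs1]
        rw [(V_hasDeriv b c a hb t htc).deriv]
        have hgneg : G t < G φ₂ :=
          hGanti ⟨h20.le, h21.le⟩
            ⟨by linarith [ht.1, h20], by linarith [ht.2, hs1]⟩ ht.1
        have hnum : 0 < -(t * (c - t) ^ b - a) := by
          simp only [hGdef] at hgneg hGφ
          linarith [hgneg, hGφ]
        have hden : 0 < (c - t) ^ b := Real.rpow_pos_of_pos (by linarith) _
        positivity
      exact hmono (Set.left_mem_Icc.mpr hgt.le) (Set.right_mem_Icc.mpr hgt.le) hgt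
end

section
/- Let b > 1, c ∈ ℝ, a > 0, E ∈ ℝ, and let φ : ℝ → ℝ be a C² function with φ(x) < c for all x ∈ ℝ, satisfying φ − φ'' = a/(c − φ)^b and (1/2)φ'² = E + φ²/2 − a/((b−1)(c−φ)^{b−1}) on ℝ. Define μ(x) = a/(c − φ(x))^b, ω₁ = (b−1)(2E + c²)/(2 a^{1/b}), and ω₂ = (1/2) a^{1/b}(b−1). Then μ is positive and satisfies, for all x ∈ ℝ, the Euler–Lagrange equation 1 − (ω₁/b) μ^{1/b − 1} − (ω₂/b) μ^{−1/b − 1}·((2b+1)μ'²/(b²μ²) − 2μ''/(bμ) − 1) = 0. -/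
open Real

/-- The momentum density `μ = a/(c-φ)^b` of a periodic traveling wave profile. -/
noncomputable def momDen (a c b : ℝ) (φ : ℝ → ℝ) : ℝ → ℝ :=
  fun x => a / (c - φ x) ^ b

lemma pow_mu_eq (a U b s t : ℝ) (ha : 0 < a) (hU : 0 < U) (h : -b * s = t) :
    (a / U ^ b) ^ s = a ^ s * U ^ t := by
  rw [div_eq_mul_inv, ← Real.rpow_neg hU.le,
    Real.mul_rpow ha.le (Real.rpow_nonneg hU.le _), ← Real.rpow_mul hU.le, h]

lemma key_alg (a b c E U X P2 Q A : ℝ) (ha : a ≠ 0) (hb : b ≠ 0) (hb1 : b - 1 ≠ 0)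
    (hU : U ≠ 0) (hX : X ≠ 0) (hA : A ≠ 0)
    (hQ : Q = c - U - a / X)
    (hP2 : P2 = 2 * E + (c - U) ^ 2 - 2 * a * U / ((b - 1) * X)) :
    1 - (b - 1) * (2 * E + c ^ 2) / (2 * A) / b * (A / a * (X / U))
      - 1 / 2 * A * (b - 1) / b * (X * U / (A * a))
        * ((2 * b + 1) * (a ^ 2 * b ^ 2 * P2 * ((X * U)⁻¹) ^ 2) / (b ^ 2 * (a / X) ^ 2)
           - 2 * (a * b * (Q * (X * U)⁻¹ + (b + 1) * P2 * (X * U * U)⁻¹)) / (b * (a / X))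
           - 1) = 0 := by
  subst hQ hP2
  field_simp
  ring

/-- With `ω₁ = (b-1)(2E + c²)/(2a^(1/b))` and `ω₂ = (1/2)a^(1/b)(b-1)`, the momentum
density `μ = a/(c-φ)^b` of a traveling wave profile satisfying the profile ODE and its
quadrature is positive and satisfies the Euler–Lagrange equation
`1 - (ω₁/b)μ^(1/b-1) - (ω₂/b)μ^(-1/b-1)((2b+1)μ'²/(b²μ²) - 2μ''/(bμ) - 1) = 0`. -/
theorem stmt8 (b c a E : ℝ) (hb : 1 < b) (ha : 0 < a) (φ : ℝ → ℝ)
    (hφ : ContDiff ℝ 2 φ) (hlt : ∀ x : ℝ, φ x < c)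
    (hode : ∀ x : ℝ, φ x - deriv (deriv φ) x = a / (c - φ x) ^ b)
    (hquad : ∀ x : ℝ, (1 / 2) * (deriv φ x) ^ 2
        = E + (φ x) ^ 2 / 2 - a / ((b - 1) * (c - φ x) ^ (b - 1))) :
    (∀ x : ℝ, 0 < momDen a c b φ x) ∧
    (∀ x : ℝ,
      1 - ((b - 1) * (2 * E + c ^ 2) / (2 * a ^ (1 / b)) / b)
            * (momDen a c b φ x) ^ (1 / b - 1)
        - ((1 / 2) * a ^ (1 / b) * (b - 1) / b)
            * (momDen a c b φ x) ^ (-(1 / b) - 1)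
            * ((2 * b + 1) * (deriv (momDen a c b φ) x) ^ 2
                  / (b ^ 2 * (momDen a c b φ x) ^ 2)
                - 2 * deriv (deriv (momDen a c b φ)) x / (b * momDen a c b φ x)
                - 1) = 0) := by
  have hu : ∀ x : ℝ, 0 < c - φ x := fun x => sub_pos.2 (hlt x)
  have hb0 : b ≠ 0 := by linarith
  have hb1 : b - 1 ≠ 0 := by linarith
  have hpos : ∀ x : ℝ, 0 < momDen a c b φ x := fun x =>
    div_pos ha (Real.rpow_pos_of_pos (hu x) b)
  refine ⟨hpos, ?_⟩
  -- differentiability facts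
  have hφ' : ContDiff ℝ (1 + 1) φ := by norm_num; exact hφ
  have hdφ : Differentiable ℝ φ := hφ.differentiable (by norm_num)
  have hdφ' : Differentiable ℝ (deriv φ) :=
    ((contDiff_succ_iff_deriv.mp hφ').2.2).differentiable (by norm_num)
  -- derivative of powers of u = c - φ
  have hU' : ∀ (p : ℝ) (x : ℝ), HasDerivAt (fun y => (c - φ y) ^ p)
      (-(deriv φ x) * p * (c - φ x) ^ (p - 1)) x := fun p x =>
    (HasDerivAt.const_sub c (hdφ x).hasDerivAt).rpow_const (Or.inl (hu x).ne')
  have hμdef : momDen a c b φ = fun x => a * (c - φ x) ^ (-b) := by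
    funext x
    rw [momDen, Real.rpow_neg (hu x).le, div_eq_mul_inv]
  have hμ' : ∀ x : ℝ, HasDerivAt (momDen a c b φ)
      (a * b * (deriv φ x * (c - φ x) ^ (-b - 1))) x := by
    intro x
    rw [hμdef]
    have h := (hU' (-b) x).const_mul a
    refine h.congr_deriv ?_
    ring
  have hd1 : deriv (momDen a c b φ)
      = fun x => a * b * (deriv φ x * (c - φ x) ^ (-b - 1)) :=
    funext fun x => (hμ' x).deriv
  have hμ'' : ∀ x : ℝ, deriv (deriv (momDen a c b φ)) x
      = a * b * (deriv (deriv φ) x * (c - φ x) ^ (-b - 1)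
          + deriv φ x * (-(deriv φ x) * (-b - 1) * (c - φ x) ^ (-b - 1 - 1))) := by
    intro x
    rw [hd1]
    exact (((hdφ' x).hasDerivAt.mul (hU' (-b - 1) x)).const_mul (a * b)).deriv
  intro x
  set U : ℝ := c - φ x with hUdef
  set P : ℝ := deriv φ x with hPdef
  set Q : ℝ := deriv (deriv φ) x with hQdef
  set A : ℝ := a ^ (1 / b) with hAdef
  have hU0 : 0 < U := hu x
  have hX0 : 0 < U ^ b := Real.rpow_pos_of_pos hU0 b
  have hA0 : 0 < A := Real.rpow_pos_of_pos ha _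
  -- power identities
  have e2 : U ^ (-b - 1) = (U ^ b * U)⁻¹ := by
    rw [show -b - 1 = -(b + 1) by ring, Real.rpow_neg hU0.le, Real.rpow_add_one hU0.ne']
  have e3 : U ^ (-b - 1 - 1) = (U ^ b * U * U)⁻¹ := by
    rw [show -b - 1 - 1 = -(b + 1 + 1) by ring, Real.rpow_neg hU0.le,
      Real.rpow_add_one hU0.ne', Real.rpow_add_one hU0.ne']
  have e4 : (a / U ^ b) ^ (1 / b - 1) = A / a * (U ^ b / U) := by
    rw [pow_mu_eq a U b (1 / b - 1) (b - 1) ha hU0 (by field_simp; ring),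
      Real.rpow_sub ha, Real.rpow_one, Real.rpow_sub hU0, Real.rpow_one, hAdef]
  have e5 : (a / U ^ b) ^ (-(1 / b) - 1) = (U ^ b * U) / (A * a) := by
    rw [pow_mu_eq a U b (-(1 / b) - 1) (b + 1) ha hU0 (by field_simp; ring),
      show -(1 / b) - 1 = -(1 / b + 1) by ring, Real.rpow_neg ha.le,
      Real.rpow_add_one ha.ne', Real.rpow_add_one hU0.ne', hAdef]
    ring
  have hmom : momDen a c b φ x = a / U ^ b := rfl
  have hD1 : deriv (momDen a c b φ) x = a * b * (P * (U ^ b * U)⁻¹) := by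
    rw [(hμ' x).deriv, ← hUdef, ← hPdef, e2]
  have hD2 : deriv (deriv (momDen a c b φ)) x
      = a * b * (Q * (U ^ b * U)⁻¹ + (b + 1) * P ^ 2 * (U ^ b * U * U)⁻¹) := by
    rw [hμ'' x, ← hUdef, ← hPdef, ← hQdef, e2, e3]
    ring
  -- the hypotheses at x
  have hφx : φ x = c - U := by rw [hUdef]; ring
  have hQval : Q = c - U - a / U ^ b := by
    have h := hode x
    rw [← hUdef, ← hQdef, hφx] at h
    linarith
  have hbm1 : U ^ (b - 1) = U ^ b / U := by
    rw [Real.rpow_sub hU0, Real.rpow_one]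
  have hPval : P ^ 2 = 2 * E + (c - U) ^ 2 - 2 * a * U / ((b - 1) * U ^ b) := by
    have h := hquad x
    rw [← hUdef, ← hPdef, hφx, hbm1] at h
    have h2 : a / ((b - 1) * (U ^ b / U)) = 2 * a * U / ((b - 1) * U ^ b) / 2 := by
      field_simp
    rw [h2] at h
    linarith
  have hkey := key_alg a b c E U (U ^ b) (P ^ 2) Q A ha.ne' hb0 hb1 hU0.ne' hX0.ne'
    hA0.ne' hQval hPval
  rw [hmom, hD1, hD2, e4, e5]
  linear_combination hkey
end

section
/- Let b > 1, T > 0, and let u : ℝ × ℝ → ℝ be smooth and T-periodic in x. Define m = u − u_xx, assume m(x,t) > 0 for all (x,t), and suppose m_t + u m_x + b m u_x = 0 everywhere. Then the function t ↦ ∫₀^T m(x,t)^{1/b} dx is constant. -/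
open Real

/-- The momentum density `m = u - u_xx` of a time-dependent field `u`. -/
noncomputable def momField (u : ℝ → ℝ → ℝ) : ℝ → ℝ → ℝ :=
  fun x t => u x t - deriv (deriv (fun y => u y t)) x

/-- Partial derivative in the first variable of a jointly smooth function is jointly smooth. -/
lemma smooth_pderiv_x (u : ℝ → ℝ → ℝ) (hu : ContDiff ℝ (⊤ : ℕ∞) (Function.uncurry u)) :
    ContDiff ℝ (⊤ : ℕ∞) (Function.uncurry fun x t => deriv (fun y => u y t) x) := by
  have h1 : (Function.uncurry fun x t => deriv (fun y => u y t) x)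
      = fun p : ℝ × ℝ => fderiv ℝ (fun y => u y p.2) p.1 (1 : ℝ) := by
    funext p
    exact (fderiv_apply_one_eq_deriv).symm
  rw [h1]
  have hf : ContDiff ℝ (⊤ : ℕ∞) (Function.uncurry (fun (p : ℝ × ℝ) (y : ℝ) => u y p.2)) :=
    hu.comp (contDiff_snd.prodMk (contDiff_snd.comp contDiff_fst))
  exact ContDiff.fderiv_apply (n := (⊤ : ℕ∞)) (m := (⊤ : ℕ∞)) hf contDiff_fst contDiff_const
    (by simp)

/-- Partial derivative in the second variable of a jointly smooth function is jointly smooth. -/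
lemma smooth_pderiv_t (u : ℝ → ℝ → ℝ) (hu : ContDiff ℝ (⊤ : ℕ∞) (Function.uncurry u)) :
    ContDiff ℝ (⊤ : ℕ∞) (Function.uncurry fun x t => deriv (fun s => u x s) t) := by
  have h1 : (Function.uncurry fun x t => deriv (fun s => u x s) t)
      = fun p : ℝ × ℝ => fderiv ℝ (fun s => u p.1 s) p.2 (1 : ℝ) := by
    funext p
    exact (fderiv_apply_one_eq_deriv).symm
  rw [h1]
  have hf : ContDiff ℝ (⊤ : ℕ∞) (Function.uncurry (fun (p : ℝ × ℝ) (s : ℝ) => u p.1 s)) :=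
    hu.comp ((contDiff_fst.comp contDiff_fst).prodMk contDiff_snd)
  exact ContDiff.fderiv_apply (n := (⊤ : ℕ∞)) (m := (⊤ : ℕ∞)) hf contDiff_snd contDiff_const
    (by simp)

/-- The derivative of a periodic function is periodic. -/
lemma deriv_of_periodic {f : ℝ → ℝ} {T : ℝ} (hf : ∀ x, f (x + T) = f x) (x : ℝ) :
    deriv f (x + T) = deriv f x := by
  have h1 : deriv (fun y => f (y + T)) x = deriv f (x + T) := deriv_comp_add_const f T x
  rw [← h1]
  congr 1
  funext y
  exact hf y

/-- Conservation of `F₁(m) = ∫₀ᵀ m^(1/b) dx` along the b-family Camassa–Holm flow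
in momentum-density form `m_t + u m_x + b m u_x = 0`, for `u` smooth, `T`-periodic
in `x`, with strictly positive momentum density. -/
theorem stmt11 (b T : ℝ) (hb : 1 < b) (hT : 0 < T) (u : ℝ → ℝ → ℝ)
    (hu : ContDiff ℝ (⊤ : ℕ∞) (Function.uncurry u))
    (hper : ∀ x t : ℝ, u (x + T) t = u x t)
    (hpos : ∀ x t : ℝ, 0 < momField u x t)
    (heq : ∀ x t : ℝ,
      deriv (fun s => momField u x s) t
        + u x t * deriv (fun y => momField u y t) x
        + b * momField u x t * deriv (fun y => u y t) x = 0) :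
    ∃ k : ℝ, ∀ t : ℝ, (∫ x in (0:ℝ)..T, (momField u x t) ^ (1 / b)) = k := by
  have hb0 : b ≠ 0 := by positivity
  -- notation
  set v : ℝ → ℝ → ℝ := fun x t => deriv (fun y => u y t) x with hv_def
  have hv : ContDiff ℝ (⊤ : ℕ∞) (Function.uncurry v) := smooth_pderiv_x u hu
  set w : ℝ → ℝ → ℝ := fun x t => deriv (fun y => v y t) x with hw_def
  have hw : ContDiff ℝ (⊤ : ℕ∞) (Function.uncurry w) := smooth_pderiv_x v hv
  set M : ℝ → ℝ → ℝ := momField u with hM_def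
  have hMeq : ∀ x t, M x t = u x t - w x t := fun x t => rfl
  have hM : ContDiff ℝ (⊤ : ℕ∞) (Function.uncurry M) := by
    have : Function.uncurry M = fun p : ℝ × ℝ => Function.uncurry u p - Function.uncurry w p :=
      rfl
    rw [this]
    exact hu.sub hw
  set Mt : ℝ → ℝ → ℝ := fun x t => deriv (fun s => M x s) t with hMt_def
  have hMt : ContDiff ℝ (⊤ : ℕ∞) (Function.uncurry Mt) := smooth_pderiv_t M hM
  set Mx : ℝ → ℝ → ℝ := fun x t => deriv (fun y => M y t) x with hMx_def
  have hMx : ContDiff ℝ (⊤ : ℕ∞) (Function.uncurry Mx) := smooth_pderiv_x M hM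
  -- basic differentiability facts
  have hMd : Differentiable ℝ (Function.uncurry M) := hM.differentiable (by simp)
  have hud : Differentiable ℝ (Function.uncurry u) := hu.differentiable (by simp)
  have hasMt : ∀ x t, HasDerivAt (fun s => M x s) (Mt x t) t := by
    intro x t
    have : DifferentiableAt ℝ (fun s => M x s) t := by
      have : (fun s => M x s) = (Function.uncurry M) ∘ (fun s => ((x : ℝ), s)) := rfl
      rw [this]
      exact (hMd _).comp t ((differentiableAt_const x).prodMk differentiableAt_id)
    exact this.hasDerivAt
  have hasMx : ∀ x t, HasDerivAt (fun y => M y t) (Mx x t) x := by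
    intro x t
    have : DifferentiableAt ℝ (fun y => M y t) x := by
      have : (fun y => M y t) = (Function.uncurry M) ∘ (fun y => (y, (t : ℝ))) := rfl
      rw [this]
      exact (hMd _).comp x (differentiableAt_id.prodMk (differentiableAt_const t))
    exact this.hasDerivAt
  have hasux : ∀ x t, HasDerivAt (fun y => u y t) (v x t) x := by
    intro x t
    have : DifferentiableAt ℝ (fun y => u y t) x := by
      have : (fun y => u y t) = (Function.uncurry u) ∘ (fun y => (y, (t : ℝ))) := rfl
      rw [this]
      exact (hud _).comp x (differentiableAt_id.prodMk (differentiableAt_const t))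
    exact this.hasDerivAt
  -- the PDE in resolved form
  have hpde : ∀ x t, Mt x t = -(u x t * Mx x t + b * M x t * v x t) := by
    intro x t
    have := heq x t
    linarith [this]
  -- h = M ^ (1/b) and its time derivative Φ
  set p : ℝ := 1 / b with hp_def
  set h : ℝ → ℝ → ℝ := fun x t => M x t ^ p with hh_def
  set Φ : ℝ → ℝ → ℝ := fun x t => p * M x t ^ (p - 1) * Mt x t with hΦ_def
  have hasht : ∀ x t, HasDerivAt (fun s => h x s) (Φ x t) t := by
    intro x t
    have h1 := (hasMt x t).rpow_const (p := p) (Or.inl (ne_of_gt (hpos x t)))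
    have h2 : Mt x t * p * M x t ^ (p - 1) = Φ x t := by rw [hΦ_def]; ring
    rw [h2] at h1
    exact h1
  -- spatial derivative of g = u * h
  set g : ℝ → ℝ → ℝ := fun x t => u x t * h x t with hg_def
  have hasgx : ∀ x t, HasDerivAt (fun y => g y t)
      (v x t * h x t + u x t * (p * M x t ^ (p - 1) * Mx x t)) x := by
    intro x t
    have h1 := (hasux x t).mul ((hasMx x t).rpow_const (p := p) (Or.inl (ne_of_gt (hpos x t))))
    have h2 : v x t * (M x t ^ p) + u x t * (Mx x t * p * M x t ^ (p - 1))
        = v x t * h x t + u x t * (p * M x t ^ (p - 1) * Mx x t) := by rw [hh_def]; ring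
    rw [h2] at h1
    exact h1
  -- key identity: Φ = -∂ₓ g
  have hkey : ∀ x t, Φ x t = -(v x t * h x t + u x t * (p * M x t ^ (p - 1) * Mx x t)) := by
    intro x t
    have hMne : M x t ≠ 0 := ne_of_gt (hpos x t)
    have hMp : M x t ^ (p - 1) * M x t = M x t ^ p := by
      rw [Real.rpow_sub_one hMne]
      field_simp
    show p * M x t ^ (p - 1) * Mt x t
        = -(v x t * h x t + u x t * (p * M x t ^ (p - 1) * Mx x t))
    rw [hpde x t]
    have hh' : h x t = M x t ^ p := rfl
    rw [hh', ← hMp, hp_def]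
    field_simp
    ring
  -- continuity facts
  have hMc : Continuous (Function.uncurry M) := hM.continuous
  have hMtc : Continuous (Function.uncurry Mt) := hMt.continuous
  have hΦc : Continuous (Function.uncurry Φ) := by
    have h1 : Continuous (fun q : ℝ × ℝ => Function.uncurry M q ^ (p - 1)) :=
      hMc.rpow_const (fun q => Or.inl (ne_of_gt (hpos q.1 q.2)))
    have : Function.uncurry Φ
        = fun q : ℝ × ℝ => p * Function.uncurry M q ^ (p - 1) * Function.uncurry Mt q := rfl
    rw [this]
    exact (continuous_const.mul h1).mul hMtc
  have hhc : Continuous (Function.uncurry h) := by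
    have : Function.uncurry h = fun q : ℝ × ℝ => Function.uncurry M q ^ p := rfl
    rw [this]
    exact hMc.rpow_const (fun q => Or.inl (ne_of_gt (hpos q.1 q.2)))
  -- periodicity of M
  have hMper : ∀ t, M T t = M 0 t := by
    intro t
    have hu' : u T t = u 0 t := by have := hper 0 t; simpa using this
    have hv' : ∀ x, v (x + T) t = v x t := fun x => deriv_of_periodic (fun y => hper y t) x
    have hw' : w T t = w 0 t := by
      have := deriv_of_periodic (f := fun y => v y t) hv' 0
      simpa using this
    rw [hMeq, hMeq, hu', hw']
  have hgper : ∀ t, g T t = g 0 t := by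
    intro t
    have hu' : u T t = u 0 t := by have := hper 0 t; simpa using this
    show u T t * M T t ^ p = u 0 t * M 0 t ^ p
    rw [hu', hMper t]
  -- the x-integral of Φ vanishes
  have hint0 : ∀ t, (∫ x in (0:ℝ)..T, Φ x t) = 0 := by
    intro t
    have hΦci : Continuous (fun x => Φ x t) := hΦc.comp (continuous_id.prodMk continuous_const)
    have := intervalIntegral.integral_eq_sub_of_hasDerivAt
      (f := fun y => -(g y t)) (f' := fun x => Φ x t) (a := (0:ℝ)) (b := T)
      (fun x _ => by
        have h1 := (hasgx x t).neg
        rwa [← hkey x t] at h1)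
      (hΦci.intervalIntegrable 0 T)
    rw [this]
    simp [hgper t]
  -- differentiation under the integral sign: F has derivative 0 everywhere
  set F : ℝ → ℝ := fun t => ∫ x in (0:ℝ)..T, h x t with hF_def
  have hF' : ∀ t₀, HasDerivAt F 0 t₀ := by
    intro t₀
    -- bound Φ on the compact set [0,T] × [t₀-1, t₀+1]
    obtain ⟨C, hC⟩ := (IsCompact.exists_bound_of_continuousOn
      ((isCompact_Icc : IsCompact (Set.Icc (0:ℝ) T)).prod
        (isCompact_Icc : IsCompact (Set.Icc (t₀ - 1) (t₀ + 1))))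
      hΦc.continuousOn)
    have key := intervalIntegral.hasDerivAt_integral_of_dominated_loc_of_deriv_le
      (F := fun t x => h x t) (F' := fun t x => Φ x t) (x₀ := t₀)
      (a := (0:ℝ)) (b := T) (bound := fun _ => C) (s := Metric.ball t₀ 1) (Metric.ball_mem_nhds t₀ one_pos)
      (Filter.Eventually.of_forall (fun t =>
        ((hhc.comp (continuous_id.prodMk continuous_const)).aestronglyMeasurable)))
      ((hhc.comp (continuous_id.prodMk continuous_const)).intervalIntegrable 0 T)
      ((hΦc.comp (continuous_id.prodMk continuous_const)).aestronglyMeasurable)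
      (MeasureTheory.ae_of_all _ (fun x hx t ht => by
        have hx' : x ∈ Set.Icc (0:ℝ) T := by
          rw [Set.uIoc_of_le hT.le] at hx
          exact Set.Ioc_subset_Icc_self hx
        have ht' : t ∈ Set.Icc (t₀ - 1) (t₀ + 1) := by
          rw [Metric.mem_ball, Real.dist_eq, abs_lt] at ht
          constructor <;> linarith [ht.1, ht.2]
        exact hC (x, t) ⟨hx', ht'⟩))
      (intervalIntegrable_const (μ := MeasureTheory.volume))
      (MeasureTheory.ae_of_all _ (fun x _ t _ => hasht x t))
    have h2 := key.2
    rw [hint0 t₀] at h2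
    exact h2
  have hFdiff : Differentiable ℝ F := fun t => (hF' t).differentiableAt
  have hFderiv : ∀ t, deriv F t = 0 := fun t => (hF' t).deriv
  refine ⟨F 0, fun t => ?_⟩
  exact is_const_of_deriv_eq_zero hFdiff hFderiv t 0
end

section
/- Let b > 1, T > 0, and let u : ℝ × ℝ → ℝ be smooth and T-periodic in x. Define m = u − u_xx, assume m(x,t) > 0 for all (x,t), and suppose m_t + u m_x + b m u_x = 0 everywhere. Then the function t ↦ ∫₀^T (m_x(x,t)²/(b² m(x,t)²) + 1)·m(x,t)^{−1/b} dx is constant. -/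
open Real

noncomputable def pdx (f : ℝ → ℝ → ℝ) : ℝ → ℝ → ℝ :=
  fun x t => fderiv ℝ (Function.uncurry f) (x, t) (1, 0)

noncomputable def pdt (f : ℝ → ℝ → ℝ) : ℝ → ℝ → ℝ :=
  fun x t => fderiv ℝ (Function.uncurry f) (x, t) (0, 1)

theorem hasDerivAt_sec_x {f : ℝ → ℝ → ℝ} (hf : ContDiff ℝ (⊤ : ℕ∞) (Function.uncurry f))
    (x t : ℝ) : HasDerivAt (fun y => f y t) (pdx f x t) x := by
  have h1 : HasDerivAt (fun y : ℝ => ((y, t) : ℝ × ℝ)) (1, 0) x :=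
    (hasDerivAt_id x).prodMk (hasDerivAt_const x t)
  exact ((hf.differentiable (by simp) (x, t)).hasFDerivAt).comp_hasDerivAt x h1

theorem hasDerivAt_sec_t {f : ℝ → ℝ → ℝ} (hf : ContDiff ℝ (⊤ : ℕ∞) (Function.uncurry f))
    (x t : ℝ) : HasDerivAt (fun s => f x s) (pdt f x t) t := by
  have h1 : HasDerivAt (fun s : ℝ => ((x, s) : ℝ × ℝ)) (0, 1) t :=
    (hasDerivAt_const t x).prodMk (hasDerivAt_id t)
  exact ((hf.differentiable (by simp) (x, t)).hasFDerivAt).comp_hasDerivAt t h1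

theorem contDiff_pdx {f : ℝ → ℝ → ℝ} (hf : ContDiff ℝ (⊤ : ℕ∞) (Function.uncurry f)) :
    ContDiff ℝ (⊤ : ℕ∞) (Function.uncurry (pdx f)) :=
  (hf.fderiv_right (mod_cast le_top)).clm_apply contDiff_const

theorem contDiff_pdt {f : ℝ → ℝ → ℝ} (hf : ContDiff ℝ (⊤ : ℕ∞) (Function.uncurry f)) :
    ContDiff ℝ (⊤ : ℕ∞) (Function.uncurry (pdt f)) :=
  (hf.fderiv_right (mod_cast le_top)).clm_apply contDiff_const

theorem deriv_sec_x {f : ℝ → ℝ → ℝ} (hf : ContDiff ℝ (⊤ : ℕ∞) (Function.uncurry f))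
    (x t : ℝ) : deriv (fun y => f y t) x = pdx f x t :=
  (hasDerivAt_sec_x hf x t).deriv

theorem deriv_sec_t {f : ℝ → ℝ → ℝ} (hf : ContDiff ℝ (⊤ : ℕ∞) (Function.uncurry f))
    (x t : ℝ) : deriv (fun s => f x s) t = pdt f x t :=
  (hasDerivAt_sec_t hf x t).deriv

theorem pdx_pdt_comm {f : ℝ → ℝ → ℝ} (hf : ContDiff ℝ (⊤ : ℕ∞) (Function.uncurry f))
    (x t : ℝ) : pdx (pdt f) x t = pdt (pdx f) x t := by
  set F := Function.uncurry f with hF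
  have hd : Differentiable ℝ F := hf.differentiable (by simp)
  have hd' : Differentiable ℝ (fderiv ℝ F) :=
    (hf.fderiv_right (m := (⊤ : ℕ∞)) (mod_cast le_top)).differentiable (by simp)
  have hsymm := second_derivative_symmetric (f := F) (f' := fderiv ℝ F)
    (f'' := fderiv ℝ (fderiv ℝ F) (x, t)) (fun y => (hd y).hasFDerivAt)
    ((hd' (x, t)).hasFDerivAt)
  have e1 : Function.uncurry (pdt f) = fun p : ℝ × ℝ => fderiv ℝ F p (0, 1) := rfl
  have e2 : Function.uncurry (pdx f) = fun p : ℝ × ℝ => fderiv ℝ F p (1, 0) := rfl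
  have key : ∀ v w : ℝ × ℝ,
      fderiv ℝ (fun p : ℝ × ℝ => fderiv ℝ F p v) (x, t) w = fderiv ℝ (fderiv ℝ F) (x, t) w v := by
    intro v w
    have := fderiv_clm_apply (c := fderiv ℝ F) (u := fun _ : ℝ × ℝ => v)
      (hd' (x, t)) (differentiableAt_const v)
    rw [this]
    simp
  show fderiv ℝ (Function.uncurry (pdt f)) (x, t) (1, 0)
      = fderiv ℝ (Function.uncurry (pdx f)) (x, t) (0, 1)
  rw [e1, e2, key, key]
  exact hsymm _ _

theorem pdx_periodic {f : ℝ → ℝ → ℝ} {T : ℝ}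
    (hf : ContDiff ℝ (⊤ : ℕ∞) (Function.uncurry f))
    (hp : ∀ x t : ℝ, f (x + T) t = f x t) (x t : ℝ) :
    pdx f (x + T) t = pdx f x t := by
  have h1 := hasDerivAt_sec_x hf (x + T) t
  have hshift : HasDerivAt (fun y : ℝ => y + T) 1 x := (hasDerivAt_id x).add_const T
  have h2 : HasDerivAt (fun y => f (y + T) t) (pdx f (x + T) t * 1) x :=
    by have := HasDerivAt.comp (x := x) h1 hshift; exact this
  have h3 : (fun y => f (y + T) t) = fun y => f y t := funext fun y => hp y t
  rw [h3, mul_one] at h2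
  exact h2.unique (hasDerivAt_sec_x hf x t)

theorem pdt_periodic {f : ℝ → ℝ → ℝ} {T : ℝ}
    (hf : ContDiff ℝ (⊤ : ℕ∞) (Function.uncurry f))
    (hp : ∀ x t : ℝ, f (x + T) t = f x t) (x t : ℝ) :
    pdt f (x + T) t = pdt f x t := by
  have h1 := hasDerivAt_sec_t hf (x + T) t
  have h3 : (fun s => f (x + T) s) = fun s => f x s := funext fun s => hp x s
  rw [h3] at h1
  exact h1.unique (hasDerivAt_sec_t hf x t)

section Setup

variable {u : ℝ → ℝ → ℝ} {b T : ℝ}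

theorem momField_eq (hu : ContDiff ℝ (⊤ : ℕ∞) (Function.uncurry u)) (x t : ℝ) :
    momField u x t = u x t - pdx (pdx u) x t := by
  have h1 : deriv (fun y => u y t) = fun y => pdx u y t :=
    funext fun y => deriv_sec_x hu y t
  unfold momField
  rw [h1, deriv_sec_x (contDiff_pdx hu) x t]

theorem contDiff_mom (hu : ContDiff ℝ (⊤ : ℕ∞) (Function.uncurry u)) :
    ContDiff ℝ (⊤ : ℕ∞) (Function.uncurry (momField u)) := by
  have : Function.uncurry (momField u)
      = fun p : ℝ × ℝ => Function.uncurry u p - Function.uncurry (pdx (pdx u)) p := by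
    funext p
    exact momField_eq hu p.1 p.2
  rw [this]
  exact hu.sub (contDiff_pdx (contDiff_pdx hu))

theorem mom_periodic (hu : ContDiff ℝ (⊤ : ℕ∞) (Function.uncurry u))
    (hper : ∀ x t : ℝ, u (x + T) t = u x t) (x t : ℝ) :
    momField u (x + T) t = momField u x t := by
  rw [momField_eq hu, momField_eq hu, hper,
    pdx_periodic (contDiff_pdx hu) (fun x t => pdx_periodic hu hper x t) x t]

end Setup

noncomputable def wF (u : ℝ → ℝ → ℝ) (b : ℝ) : ℝ → ℝ → ℝ :=
  fun x t => momField u x t ^ (-(1 / b))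

noncomputable def FF (u : ℝ → ℝ → ℝ) (b : ℝ) : ℝ → ℝ → ℝ :=
  fun x t => (pdx (wF u b) x t) ^ 2 / wF u b x t + wF u b x t

noncomputable def GG (u : ℝ → ℝ → ℝ) (b : ℝ) : ℝ → ℝ → ℝ :=
  fun x t => -(u x t) * (pdx (wF u b) x t) ^ 2 / wF u b x t + u x t * wF u b x t
    + (2 / (b - 1)) * (wF u b x t) ^ (1 - b)

section Main

variable {u : ℝ → ℝ → ℝ} {b T : ℝ}

theorem w_pos (hpos : ∀ x t : ℝ, 0 < momField u x t) (x t : ℝ) : 0 < wF u b x t :=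
  Real.rpow_pos_of_pos (hpos x t) _

theorem contDiff_w (hu : ContDiff ℝ (⊤ : ℕ∞) (Function.uncurry u))
    (hpos : ∀ x t : ℝ, 0 < momField u x t) :
    ContDiff ℝ (⊤ : ℕ∞) (Function.uncurry (wF u b)) := by
  have : Function.uncurry (wF u b)
      = fun p : ℝ × ℝ => (Function.uncurry (momField u) p) ^ (-(1 / b)) := rfl
  rw [this]
  exact (contDiff_mom hu).rpow_const_of_ne fun p => (hpos p.1 p.2).ne'

theorem w_periodic (hu : ContDiff ℝ (⊤ : ℕ∞) (Function.uncurry u))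
    (hper : ∀ x t : ℝ, u (x + T) t = u x t) (x t : ℝ) :
    wF u b (x + T) t = wF u b x t := by
  unfold wF
  rw [mom_periodic hu hper]

theorem contDiff_F (hu : ContDiff ℝ (⊤ : ℕ∞) (Function.uncurry u))
    (hpos : ∀ x t : ℝ, 0 < momField u x t) :
    ContDiff ℝ (⊤ : ℕ∞) (Function.uncurry (FF u b)) := by
  have : Function.uncurry (FF u b)
      = fun p : ℝ × ℝ => (Function.uncurry (pdx (wF u b)) p) ^ 2 / Function.uncurry (wF u b) p
          + Function.uncurry (wF u b) p := rfl
  rw [this]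
  have hw := contDiff_w (b := b) hu hpos
  exact (((contDiff_pdx hw).pow 2).div hw fun p => (w_pos hpos p.1 p.2).ne').add hw

theorem contDiff_G (hu : ContDiff ℝ (⊤ : ℕ∞) (Function.uncurry u))
    (hpos : ∀ x t : ℝ, 0 < momField u x t) :
    ContDiff ℝ (⊤ : ℕ∞) (Function.uncurry (GG u b)) := by
  have : Function.uncurry (GG u b)
      = fun p : ℝ × ℝ =>
          -(Function.uncurry u p) * (Function.uncurry (pdx (wF u b)) p) ^ 2
              / Function.uncurry (wF u b) p
            + Function.uncurry u p * Function.uncurry (wF u b) p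
            + (2 / (b - 1)) * (Function.uncurry (wF u b) p) ^ (1 - b) := rfl
  rw [this]
  have hw := contDiff_w (b := b) hu hpos
  have hwne : ∀ p : ℝ × ℝ, Function.uncurry (wF u b) p ≠ 0 :=
    fun p => (w_pos hpos p.1 p.2).ne'
  exact (((hu.neg.mul ((contDiff_pdx hw).pow 2)).div hw hwne).add (hu.mul hw)).add
    (contDiff_const.mul (hw.rpow_const_of_ne hwne))

end Main

noncomputable def EE (u : ℝ → ℝ → ℝ) (b : ℝ) : ℝ → ℝ → ℝ :=
  fun x t => pdx u x t * wF u b x t - u x t * pdx (wF u b) x t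

section Main2

variable {u : ℝ → ℝ → ℝ} {b T : ℝ}

theorem contDiff_E (hu : ContDiff ℝ (⊤ : ℕ∞) (Function.uncurry u))
    (hpos : ∀ x t : ℝ, 0 < momField u x t) :
    ContDiff ℝ (⊤ : ℕ∞) (Function.uncurry (EE u b)) := by
  have : Function.uncurry (EE u b)
      = fun p : ℝ × ℝ => Function.uncurry (pdx u) p * Function.uncurry (wF u b) p
          - Function.uncurry u p * Function.uncurry (pdx (wF u b)) p := rfl
  rw [this]
  have hw := contDiff_w (b := b) hu hpos
  exact ((contDiff_pdx hu).mul hw).sub (hu.mul (contDiff_pdx hw))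

theorem wx_formula (hu : ContDiff ℝ (⊤ : ℕ∞) (Function.uncurry u))
    (hpos : ∀ x t : ℝ, 0 < momField u x t) (x t : ℝ) :
    pdx (wF u b) x t
      = pdx (momField u) x t * (-(1 / b)) * momField u x t ^ (-(1 / b) - 1) :=
  (hasDerivAt_sec_x (contDiff_w hu hpos) x t).unique
    ((hasDerivAt_sec_x (contDiff_mom hu) x t).rpow_const (Or.inl (hpos x t).ne'))

theorem wt_formula (hu : ContDiff ℝ (⊤ : ℕ∞) (Function.uncurry u))
    (hpos : ∀ x t : ℝ, 0 < momField u x t) (x t : ℝ) :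
    pdt (wF u b) x t
      = pdt (momField u) x t * (-(1 / b)) * momField u x t ^ (-(1 / b) - 1) :=
  (hasDerivAt_sec_t (contDiff_w hu hpos) x t).unique
    ((hasDerivAt_sec_t (contDiff_mom hu) x t).rpow_const (Or.inl (hpos x t).ne'))

theorem wt_transport (hb : 1 < b) (hu : ContDiff ℝ (⊤ : ℕ∞) (Function.uncurry u))
    (hpos : ∀ x t : ℝ, 0 < momField u x t)
    (heq : ∀ x t : ℝ,
      deriv (fun s => momField u x s) t
        + u x t * deriv (fun y => momField u y t) x
        + b * momField u x t * deriv (fun y => u y t) x = 0) (x t : ℝ) :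
    pdt (wF u b) x t = pdx u x t * wF u b x t - u x t * pdx (wF u b) x t := by
  have hbne : b ≠ 0 := (lt_trans zero_lt_one hb).ne'
  have hm := contDiff_mom hu
  have hMt : pdt (momField u) x t
      = -(u x t * pdx (momField u) x t) - b * momField u x t * pdx u x t := by
    have h := heq x t
    rw [deriv_sec_t hm, deriv_sec_x hm, deriv_sec_x hu] at h
    linarith
  have hmm : momField u x t ^ (-(1 / b))
      = momField u x t ^ (-(1 / b) - 1) * momField u x t := by
    rw [← Real.rpow_add_one (hpos x t).ne' (-(1 / b) - 1)]
    norm_num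
  rw [wt_formula hu hpos, wx_formula hu hpos, hMt]
  have hwdef : wF u b x t = momField u x t ^ (-(1 / b)) := rfl
  rw [hwdef, hmm]
  field_simp
  ring

theorem wxt_transport (hb : 1 < b) (hu : ContDiff ℝ (⊤ : ℕ∞) (Function.uncurry u))
    (hpos : ∀ x t : ℝ, 0 < momField u x t)
    (heq : ∀ x t : ℝ,
      deriv (fun s => momField u x s) t
        + u x t * deriv (fun y => momField u y t) x
        + b * momField u x t * deriv (fun y => u y t) x = 0) (x t : ℝ) :
    pdt (pdx (wF u b)) x t
      = pdx (pdx u) x t * wF u b x t + pdx u x t * pdx (wF u b) x t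
        - (pdx u x t * pdx (wF u b) x t + u x t * pdx (pdx (wF u b)) x t) := by
  have hw := contDiff_w (b := b) hu hpos
  have hE : pdt (wF u b) = EE u b :=
    funext fun x => funext fun t => wt_transport hb hu hpos heq x t
  rw [← pdx_pdt_comm hw x t, hE]
  refine (hasDerivAt_sec_x (contDiff_E hu hpos) x t).unique ?_
  exact ((hasDerivAt_sec_x (contDiff_pdx hu) x t).mul (hasDerivAt_sec_x hw x t)).sub
    ((hasDerivAt_sec_x hu x t).mul (hasDerivAt_sec_x (contDiff_pdx hw) x t))

end Main2

section Key

variable {u : ℝ → ℝ → ℝ} {b T : ℝ}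

theorem key_identity (hb : 1 < b) (hu : ContDiff ℝ (⊤ : ℕ∞) (Function.uncurry u))
    (hpos : ∀ x t : ℝ, 0 < momField u x t)
    (heq : ∀ x t : ℝ,
      deriv (fun s => momField u x s) t
        + u x t * deriv (fun y => momField u y t) x
        + b * momField u x t * deriv (fun y => u y t) x = 0) (x t : ℝ) :
    pdt (FF u b) x t = pdx (GG u b) x t := by
  have hbne : b ≠ 0 := (lt_trans zero_lt_one hb).ne'
  have hb1 : b - 1 ≠ 0 := sub_ne_zero.mpr hb.ne'
  have hw := contDiff_w (b := b) hu hpos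
  have hWpos := w_pos (b := b) hpos x t
  have hWne : wF u b x t ≠ 0 := hWpos.ne'
  -- section derivatives
  have hUx := hasDerivAt_sec_x hu x t
  have hWsecx := hasDerivAt_sec_x hw x t
  have hWxsecx := hasDerivAt_sec_x (contDiff_pdx hw) x t
  have hWsect := hasDerivAt_sec_t hw x t
  have hWxsect := hasDerivAt_sec_t (contDiff_pdx hw) x t
  -- time derivative of F
  have hF2 : HasDerivAt (fun s => FF u b x s)
      (((2 : ℕ) * pdx (wF u b) x t ^ (2 - 1) * pdt (pdx (wF u b)) x t * wF u b x t
          - pdx (wF u b) x t ^ 2 * pdt (wF u b) x t) / wF u b x t ^ 2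
        + pdt (wF u b) x t) t :=
    ((hWxsect.pow 2).div hWsect hWne).add hWsect
  have hFt := (hasDerivAt_sec_t (contDiff_F hu hpos) x t).unique hF2
  -- spatial derivative of G
  have hG2 : HasDerivAt (fun y => GG u b y t)
      (((-(pdx u x t) * pdx (wF u b) x t ^ 2
            + -(u x t) * ((2 : ℕ) * pdx (wF u b) x t ^ (2 - 1) * pdx (pdx (wF u b)) x t))
            * wF u b x t
          - -(u x t) * pdx (wF u b) x t ^ 2 * pdx (wF u b) x t) / wF u b x t ^ 2
        + (pdx u x t * wF u b x t + u x t * pdx (wF u b) x t)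
        + 2 / (b - 1) * (pdx (wF u b) x t * (1 - b) * wF u b x t ^ (1 - b - 1))) x := by
    exact (((hUx.neg.mul (hWxsecx.pow 2)).div hWsecx hWne).add (hUx.mul hWsecx)).add
      ((hWsecx.rpow_const (Or.inl hWne)).const_mul (2 / (b - 1)))
  have hGx := (hasDerivAt_sec_x (contDiff_G hu hpos) x t).unique hG2
  rw [hFt, hGx]
  -- rewrite transported quantities
  rw [wxt_transport hb hu hpos heq x t, wt_transport hb hu hpos heq x t]
  have hwm : wF u b x t ^ (1 - b - 1) = momField u x t := by
    rw [show (1 : ℝ) - b - 1 = -b by ring]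
    show (momField u x t ^ (-(1 / b))) ^ (-b) = momField u x t
    rw [← Real.rpow_mul (hpos x t).le, show -(1 / b) * -b = 1 by field_simp,
      Real.rpow_one]
  have huxx : pdx (pdx u) x t = u x t - momField u x t := by
    have h := momField_eq hu x t
    linarith
  rw [hwm, huxx]
  field_simp
  ring

end Key

section Integral

variable {u : ℝ → ℝ → ℝ} {b T : ℝ}

theorem G_periodic (hb : 1 < b) (hu : ContDiff ℝ (⊤ : ℕ∞) (Function.uncurry u))
    (hpos : ∀ x t : ℝ, 0 < momField u x t)
    (hper : ∀ x t : ℝ, u (x + T) t = u x t) (x t : ℝ) :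
    GG u b (x + T) t = GG u b x t := by
  have hw := contDiff_w (b := b) hu hpos
  have hwper : ∀ x t : ℝ, wF u b (x + T) t = wF u b x t := w_periodic hu hper
  unfold GG
  rw [hper, hwper, pdx_periodic hw hwper]

theorem integral_Ft_zero (hb : 1 < b) (hu : ContDiff ℝ (⊤ : ℕ∞) (Function.uncurry u))
    (hpos : ∀ x t : ℝ, 0 < momField u x t)
    (hper : ∀ x t : ℝ, u (x + T) t = u x t)
    (heq : ∀ x t : ℝ,
      deriv (fun s => momField u x s) t
        + u x t * deriv (fun y => momField u y t) x
        + b * momField u x t * deriv (fun y => u y t) x = 0) (s : ℝ) :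
    (∫ x in (0:ℝ)..T, pdt (FF u b) x s) = 0 := by
  have hG := contDiff_G (b := b) hu hpos
  have h1 : (∫ x in (0:ℝ)..T, pdt (FF u b) x s)
      = ∫ x in (0:ℝ)..T, pdx (GG u b) x s := by
    congr 1
    funext x
    exact key_identity hb hu hpos heq x s
  rw [h1]
  have hcont : Continuous fun x => pdx (GG u b) x s :=
    (contDiff_pdx hG).continuous.comp (continuous_id.prodMk continuous_const)
  have h2 := intervalIntegral.integral_eq_sub_of_hasDerivAt
    (f := fun y => GG u b y s) (f' := fun x => pdx (GG u b) x s) (a := (0:ℝ)) (b := T)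
    (fun x _ => hasDerivAt_sec_x hG x s) (hcont.intervalIntegrable 0 T)
  have h3 := G_periodic (T := T) hb hu hpos hper 0 s
  rw [zero_add] at h3
  rw [h2, h3, sub_self]

end Integral

section Final

variable {u : ℝ → ℝ → ℝ} {b T : ℝ}

theorem integrand_eq (hb : 1 < b) (hu : ContDiff ℝ (⊤ : ℕ∞) (Function.uncurry u))
    (hpos : ∀ x t : ℝ, 0 < momField u x t) (x t : ℝ) :
    ((deriv (fun y => momField u y t) x) ^ 2 / (b ^ 2 * (momField u x t) ^ 2) + 1)
        * (momField u x t) ^ (-(1 / b)) = FF u b x t := by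
  have hbne : b ≠ 0 := (lt_trans zero_lt_one hb).ne'
  have hm := contDiff_mom hu
  have hmne : momField u x t ≠ 0 := (hpos x t).ne'
  have hPpos : 0 < momField u x t ^ (-(1 / b) - 1) := Real.rpow_pos_of_pos (hpos x t) _
  rw [deriv_sec_x hm]
  show _ = (pdx (wF u b) x t) ^ 2 / wF u b x t + wF u b x t
  rw [wx_formula hu hpos]
  have hmm : momField u x t ^ (-(1 / b))
      = momField u x t ^ (-(1 / b) - 1) * momField u x t := by
    rw [← Real.rpow_add_one (hpos x t).ne' (-(1 / b) - 1)]
    norm_num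
  show _ = _ / (momField u x t ^ (-(1 / b))) + momField u x t ^ (-(1 / b))
  rw [hmm]
  set A := momField u x t with hA
  set P := A ^ (-(1 / b) - 1) with hP
  field_simp

theorem hasDerivAt_J (hb : 1 < b) (hT : 0 < T)
    (hu : ContDiff ℝ (⊤ : ℕ∞) (Function.uncurry u))
    (hper : ∀ x t : ℝ, u (x + T) t = u x t)
    (hpos : ∀ x t : ℝ, 0 < momField u x t)
    (heq : ∀ x t : ℝ,
      deriv (fun s => momField u x s) t
        + u x t * deriv (fun y => momField u y t) x
        + b * momField u x t * deriv (fun y => u y t) x = 0) (t₀ : ℝ) :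
    HasDerivAt (fun t => ∫ x in (0:ℝ)..T, FF u b x t) 0 t₀ := by
  have hF := contDiff_F (b := b) hu hpos
  have hFcont : Continuous (Function.uncurry (FF u b)) := hF.continuous
  have hFtcont : Continuous (Function.uncurry (pdt (FF u b))) := (contDiff_pdt hF).continuous
  have hK : IsCompact (Set.uIcc (0:ℝ) T ×ˢ Metric.closedBall t₀ 1) :=
    isCompact_uIcc.prod (isCompact_closedBall _ _)
  obtain ⟨C, hC⟩ := hK.exists_bound_of_continuousOn hFtcont.continuousOn
  have hsec : ∀ t : ℝ, Continuous fun x => FF u b x t := fun t =>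
    hFcont.comp (continuous_id.prodMk continuous_const)
  have hsec' : Continuous fun x => pdt (FF u b) x t₀ :=
    hFtcont.comp (continuous_id.prodMk continuous_const)
  have key := intervalIntegral.hasDerivAt_integral_of_dominated_loc_of_deriv_le
    (F := fun t x => FF u b x t) (F' := fun t x => pdt (FF u b) x t) (x₀ := t₀)
    (s := Metric.ball t₀ 1) (a := 0) (b := T) (bound := fun _ => |C|) (μ := MeasureTheory.volume)
    (Metric.ball_mem_nhds t₀ one_pos)
    (Filter.Eventually.of_forall fun t => ((hsec t).aestronglyMeasurable))
    ((hsec t₀).intervalIntegrable 0 T)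
    hsec'.aestronglyMeasurable
    (MeasureTheory.ae_of_all _ fun x hx t ht => by
      have := hC (x, t) ⟨Set.uIoc_subset_uIcc hx, Metric.ball_subset_closedBall ht⟩
      exact le_trans this (le_abs_self C))
    intervalIntegrable_const
    (MeasureTheory.ae_of_all _ fun x hx t ht => hasDerivAt_sec_t hF x t)
  have h0 := integral_Ft_zero hb hu hpos hper heq t₀
  rw [h0] at key
  exact key.2

end Final

/-- Conservation of `F₂(m) = ∫₀ᵀ (m_x²/(b²m²) + 1) m^(-1/b) dx` along the b-family
Camassa–Holm flow in momentum-density form `m_t + u m_x + b m u_x = 0`, for `u`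
smooth, `T`-periodic in `x`, with strictly positive momentum density. -/
theorem stmt12 (b T : ℝ) (hb : 1 < b) (hT : 0 < T) (u : ℝ → ℝ → ℝ)
    (hu : ContDiff ℝ (⊤ : ℕ∞) (Function.uncurry u))
    (hper : ∀ x t : ℝ, u (x + T) t = u x t)
    (hpos : ∀ x t : ℝ, 0 < momField u x t)
    (heq : ∀ x t : ℝ,
      deriv (fun s => momField u x s) t
        + u x t * deriv (fun y => momField u y t) x
        + b * momField u x t * deriv (fun y => u y t) x = 0) :
    ∃ k : ℝ, ∀ t : ℝ,
      (∫ x in (0:ℝ)..T,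
        ((deriv (fun y => momField u y t) x) ^ 2 / (b ^ 2 * (momField u x t) ^ 2) + 1)
          * (momField u x t) ^ (-(1 / b))) = k := by
  refine ⟨∫ x in (0:ℝ)..T, FF u b x 0, fun t => ?_⟩
  have hd : ∀ s : ℝ, HasDerivAt (fun t => ∫ x in (0:ℝ)..T, FF u b x t) 0 s :=
    hasDerivAt_J hb hT hu hper hpos heq
  have hconst : (∫ x in (0:ℝ)..T, FF u b x t) = ∫ x in (0:ℝ)..T, FF u b x 0 :=
    is_const_of_deriv_eq_zero (fun s => (hd s).differentiableAt) (fun s => (hd s).deriv) t 0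
  have h1 : (∫ x in (0:ℝ)..T,
      ((deriv (fun y => momField u y t) x) ^ 2 / (b ^ 2 * (momField u x t) ^ 2) + 1)
        * (momField u x t) ^ (-(1 / b))) = ∫ x in (0:ℝ)..T, FF u b x t := by
    congr 1
    funext x
    exact integrand_eq hb hu hpos x t
  rw [h1, hconst]
end

section
/- Let H be a complex Hilbert space, let L : H → H be a continuous self-adjoint linear operator, and let S : H → H be a continuous linear operator with continuous inverse. Set A = S ∘ L ∘ S*, where S* is the Hilbert-space adjoint of S. Then L and A have the same inertia: (i) for every n ∈ ℕ, there exists an n-dimensional subspace W of H with Re⟨Lx, x⟩ < 0 for all nonzero x ∈ W if and only if there exists an n-dimensional subspace W' with Re⟨Ax, x⟩ < 0 for all nonzero x ∈ W'; (ii) the same equivalence holds with < 0 replaced by > 0; and (iii) the kernels of L and A have the same dimension. -/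
open ContinuousLinearMap

section Aux

variable {H : Type*} [NormedAddCommGroup H] [InnerProductSpace ℂ H] [CompleteSpace H]

private lemma aux_inner (L S : H →L[ℂ] H) (x : H) :
    (inner ℂ ((S ∘L L ∘L ContinuousLinearMap.adjoint S) x) x : ℂ)
      = inner ℂ (L (ContinuousLinearMap.adjoint S x)) (ContinuousLinearMap.adjoint S x) := by
  simp only [ContinuousLinearMap.comp_apply]
  rw [← ContinuousLinearMap.adjoint_inner_right]

private lemma aux_dir (L S S' : H →L[ℂ] H)
    (hS'₁ : S' ∘L S = ContinuousLinearMap.id ℂ H)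
    (hS'₂ : S ∘L S' = ContinuousLinearMap.id ℂ H)
    (P : ℝ → Prop) (n : ℕ)
    (h : ∃ W : Submodule ℂ H, Module.finrank ℂ W = n ∧
        ∀ x ∈ W, x ≠ 0 → P (inner ℂ (L x) x : ℂ).re) :
    ∃ W : Submodule ℂ H, Module.finrank ℂ W = n ∧
        ∀ x ∈ W, x ≠ 0 →
          P (inner ℂ ((S ∘L L ∘L ContinuousLinearMap.adjoint S) x) x : ℂ).re := by
  obtain ⟨W, hWn, hW⟩ := h
  set T := ContinuousLinearMap.adjoint S
  set T' := ContinuousLinearMap.adjoint S'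
  have hTT' : ∀ x, T (T' x) = x := by
    intro x
    have : T ∘L T' = ContinuousLinearMap.id ℂ H := by
      rw [← ContinuousLinearMap.adjoint_comp, hS'₁, ContinuousLinearMap.adjoint_id]
    calc T (T' x) = (T ∘L T') x := rfl
    _ = x := by rw [this]; rfl
  -- linear equivalence given by T'
  let e : H ≃ₗ[ℂ] H :=
    { toFun := T', invFun := T, map_add' := T'.map_add, map_smul' := T'.map_smul,
      left_inv := hTT',
      right_inv := fun x => by
        have : T' ∘L T = ContinuousLinearMap.id ℂ H := by
          rw [← ContinuousLinearMap.adjoint_comp, hS'₂, ContinuousLinearMap.adjoint_id]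
        calc T' (T x) = (T' ∘L T) x := rfl
        _ = x := by rw [this]; rfl }
  refine ⟨W.map (e : H →ₗ[ℂ] H), by rw [LinearEquiv.finrank_map_eq, hWn], ?_⟩
  rintro x hx hx0
  obtain ⟨w, hw, rfl⟩ := hx
  have hw0 : w ≠ 0 := by rintro rfl; exact hx0 (map_zero _)
  have hT : T ((e : H →ₗ[ℂ] H) w) = w := hTT' w
  rw [aux_inner]
  show P (inner ℂ (L (T ((e : H →ₗ[ℂ] H) w))) (T ((e : H →ₗ[ℂ] H) w)) : ℂ).re
  rw [hT]
  exact hW w hw hw0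

private lemma aux_inv (L S S' : H →L[ℂ] H)
    (hS'₁ : S' ∘L S = ContinuousLinearMap.id ℂ H)
    (hS'₂ : S ∘L S' = ContinuousLinearMap.id ℂ H) :
    S' ∘L (S ∘L L ∘L ContinuousLinearMap.adjoint S) ∘L ContinuousLinearMap.adjoint S' = L := by
  have h1 : ContinuousLinearMap.adjoint S ∘L ContinuousLinearMap.adjoint S'
      = ContinuousLinearMap.id ℂ H := by
    rw [← ContinuousLinearMap.adjoint_comp, hS'₁, ContinuousLinearMap.adjoint_id]
  ext x
  simp only [ContinuousLinearMap.comp_apply]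
  have hx : ContinuousLinearMap.adjoint S (ContinuousLinearMap.adjoint S' x) = x := by
    calc _ = (ContinuousLinearMap.adjoint S ∘L ContinuousLinearMap.adjoint S') x := rfl
    _ = x := by rw [h1]; rfl
  rw [hx]
  calc S' (S (L x)) = (S' ∘L S) (L x) := rfl
  _ = L x := by rw [hS'₁]; rfl

end Aux

/-- Sylvester's inertia law for self-adjoint operators on a complex Hilbert space:
if `S` is boundedly invertible, then `L` and `A = S L S*` have the same number of
negative directions, the same number of positive directions, and kernels of the
same dimension. -/
theorem stmt13 {H : Type*} [NormedAddCommGroup H] [InnerProductSpace ℂ H]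
    [CompleteSpace H] (L S S' : H →L[ℂ] H) (hL : IsSelfAdjoint L)
    (hS'₁ : S' ∘L S = ContinuousLinearMap.id ℂ H)
    (hS'₂ : S ∘L S' = ContinuousLinearMap.id ℂ H) :
    (∀ n : ℕ,
      (∃ W : Submodule ℂ H, Module.finrank ℂ W = n ∧
        ∀ x ∈ W, x ≠ 0 → (inner ℂ (L x) x : ℂ).re < 0) ↔
      (∃ W : Submodule ℂ H, Module.finrank ℂ W = n ∧
        ∀ x ∈ W, x ≠ 0 →
          (inner ℂ ((S ∘L L ∘L ContinuousLinearMap.adjoint S) x) x : ℂ).re < 0)) ∧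
    (∀ n : ℕ,
      (∃ W : Submodule ℂ H, Module.finrank ℂ W = n ∧
        ∀ x ∈ W, x ≠ 0 → 0 < (inner ℂ (L x) x : ℂ).re) ↔
      (∃ W : Submodule ℂ H, Module.finrank ℂ W = n ∧
        ∀ x ∈ W, x ≠ 0 →
          0 < (inner ℂ ((S ∘L L ∘L ContinuousLinearMap.adjoint S) x) x : ℂ).re)) ∧
    Module.rank ℂ (LinearMap.ker (L : H →ₗ[ℂ] H))
      = Module.rank ℂ (LinearMap.ker ((S ∘L L ∘L ContinuousLinearMap.adjoint S : H →L[ℂ] H) : H →ₗ[ℂ] H)) := by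
  set A := S ∘L L ∘L ContinuousLinearMap.adjoint S with hA
  have hback : ∀ (P : ℝ → Prop) (n : ℕ),
      (∃ W : Submodule ℂ H, Module.finrank ℂ W = n ∧
        ∀ x ∈ W, x ≠ 0 → P (inner ℂ (A x) x : ℂ).re) →
      ∃ W : Submodule ℂ H, Module.finrank ℂ W = n ∧
        ∀ x ∈ W, x ≠ 0 → P (inner ℂ (L x) x : ℂ).re := by
    intro P n h
    have := aux_dir A S' S hS'₂ hS'₁ P n h
    rwa [hA, aux_inv L S S' hS'₁ hS'₂] at this
  refine ⟨fun n => ⟨aux_dir L S S' hS'₁ hS'₂ (fun r => r < 0) n,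
      hback (fun r => r < 0) n⟩,
    fun n => ⟨aux_dir L S S' hS'₁ hS'₂ (fun r => 0 < r) n,
      hback (fun r => 0 < r) n⟩, ?_⟩
  -- kernels
  set T := ContinuousLinearMap.adjoint S
  set T' := ContinuousLinearMap.adjoint S'
  have hTT' : T ∘L T' = ContinuousLinearMap.id ℂ H := by
    rw [← ContinuousLinearMap.adjoint_comp, hS'₁, ContinuousLinearMap.adjoint_id]
  have hT'T : T' ∘L T = ContinuousLinearMap.id ℂ H := by
    rw [← ContinuousLinearMap.adjoint_comp, hS'₂, ContinuousLinearMap.adjoint_id]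
  have hSinj : Function.Injective S := by
    intro x y hxy
    have : (S' ∘L S) x = (S' ∘L S) y := by simp [ContinuousLinearMap.comp_apply, hxy]
    rwa [hS'₁] at this
  let e : H ≃ₗ[ℂ] H :=
    { toFun := T', invFun := T, map_add' := T'.map_add, map_smul' := T'.map_smul,
      left_inv := fun x => by
        calc T (T' x) = (T ∘L T') x := rfl
        _ = x := by rw [hTT']; rfl,
      right_inv := fun x => by
        calc T' (T x) = (T' ∘L T) x := rfl
        _ = x := by rw [hT'T]; rfl }
  have hker : LinearMap.ker (A : H →ₗ[ℂ] H) = (LinearMap.ker (L : H →ₗ[ℂ] H)).map (e : H →ₗ[ℂ] H) := by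
    ext x
    simp only [LinearMap.mem_ker, Submodule.mem_map]
    constructor
    · intro hx
      refine ⟨T x, ?_, ?_⟩
      · have : S (L (T x)) = 0 := hx
        have h0 : S (L (T x)) = S 0 := by simpa using this
        exact hSinj h0
      · exact e.right_inv x
    · rintro ⟨w, hw, rfl⟩
      show S (L (T ((e : H →ₗ[ℂ] H) w))) = 0
      have : T ((e : H →ₗ[ℂ] H) w) = w := e.left_inv w
      rw [ContinuousLinearMap.coe_coe] at hw
      rw [this, hw, map_zero]
  rw [hker]
  exact (e.submoduleMap (LinearMap.ker (L : H →ₗ[ℂ] H))).rank_eq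
end

section
/- Let H be a real Hilbert space and L : H → H a continuous self-adjoint linear operator. Suppose there are nonzero vectors χ, k ∈ H with ⟨χ, k⟩ = 0, a real λ > 0 with Lχ = −λχ, Lk = 0, and a δ > 0 such that ⟨Lp, p⟩ ≥ δ‖p‖² for every p ∈ H orthogonal to both χ and k. Suppose further there exists ψ ∈ H with ⟨Lψ, ψ⟩ < 0. Then there exists a constant C > 0 such that ⟨Lm, m⟩ ≥ C‖m‖² for every m ∈ H satisfying ⟨m, k⟩ = 0 and ⟨Lψ, m⟩ = 0. -/
open scoped RealInnerProductSpace

set_option maxHeartbeats 1000000 in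
/-- Abstract coercivity principle: a self-adjoint operator `L` on a real Hilbert
space with one negative direction `χ` (eigenvalue `-λ`), one null direction `k`,
a positive gap `δ` on the orthogonal complement of `χ` and `k`, and a vector `ψ`
with `⟨Lψ, ψ⟩ < 0`, is uniformly coercive on `{m : ⟨m, k⟩ = 0, ⟨Lψ, m⟩ = 0}`. -/
theorem stmt14 {H : Type*} [NormedAddCommGroup H] [InnerProductSpace ℝ H]
    [CompleteSpace H] (L : H →L[ℝ] H) (hL : IsSelfAdjoint L)
    (χ k : H) (hχ : χ ≠ 0) (hk : k ≠ 0) (hortho : ⟪χ, k⟫ = 0)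
    (lam : ℝ) (hlam : 0 < lam) (hχeig : L χ = -lam • χ) (hk0 : L k = 0)
    (δ : ℝ) (hδ : 0 < δ)
    (hgap : ∀ p : H, ⟪p, χ⟫ = 0 → ⟪p, k⟫ = 0 → ⟪L p, p⟫ ≥ δ * ‖p‖ ^ 2)
    (ψ : H) (hψ : ⟪L ψ, ψ⟫ < 0) :
    ∃ C > (0 : ℝ), ∀ m : H, ⟪m, k⟫ = 0 → ⟪L ψ, m⟫ = 0 →
      ⟪L m, m⟫ ≥ C * ‖m‖ ^ 2 := by
  have hsym : ∀ x y : H, ⟪L x, y⟫ = ⟪x, L y⟫ := fun x y => hL.isSymmetric x y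
  have hχn : (0:ℝ) < ‖χ‖ := norm_pos_iff.mpr hχ
  have hkn : (0:ℝ) < ‖k‖ := norm_pos_iff.mpr hk
  have hnχ : (0:ℝ) < ‖χ‖ ^ 2 := by positivity
  have hnk : (0:ℝ) < ‖k‖ ^ 2 := by positivity
  set nχ : ℝ := ‖χ‖ ^ 2 with hnχdef
  -- inner products against χ and k
  have hinχ : ∀ x : H, ⟪L x, χ⟫ = -lam * ⟪x, χ⟫ := by
    intro x
    rw [hsym x χ, hχeig, real_inner_smul_right]
  have hink : ∀ x : H, ⟪L x, k⟫ = 0 := by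
    intro x; rw [hsym x k, hk0, inner_zero_right]
  -- decompose ψ
  set α : ℝ := ⟪ψ, χ⟫ / nχ with hαdef
  set β : ℝ := ⟪ψ, k⟫ / ‖k‖ ^ 2 with hβdef
  set q : H := ψ - α • χ - β • k with hqdef
  have hχχ : ⟪χ, χ⟫ = nχ := real_inner_self_eq_norm_sq χ
  have hkk : ⟪k, k⟫ = ‖k‖ ^ 2 := real_inner_self_eq_norm_sq k
  have hkχ : ⟪k, χ⟫ = 0 := by rw [real_inner_comm]; exact hortho
  have hqχ : ⟪q, χ⟫ = 0 := by
    simp only [hqdef, inner_sub_left, real_inner_smul_left, hχχ, hkχ, mul_zero]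
    rw [hαdef]
    field_simp
    ring
  have hqk : ⟪q, k⟫ = 0 := by
    simp only [hqdef, inner_sub_left, real_inner_smul_left, hkk, hortho, mul_zero]
    rw [hβdef]
    field_simp
    ring
  have hχq : ⟪χ, q⟫ = 0 := by rw [real_inner_comm]; exact hqχ
  have hkq : ⟪k, q⟫ = 0 := by rw [real_inner_comm]; exact hqk
  have hψdec : ψ = α • χ + β • k + q := by rw [hqdef]; abel
  have hQqnn : (0:ℝ) ≤ ⟪L q, q⟫ := le_trans (by positivity) (hgap q hqχ hqk)
  -- energy of ψ
  have hψen : ⟪L ψ, ψ⟫ = -(lam * α ^ 2 * nχ) + ⟪L q, q⟫ := by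
    conv_lhs => rw [hψdec]
    simp only [map_add, map_smul, hχeig, hk0, smul_zero, smul_smul,
      inner_add_left, inner_add_right, real_inner_smul_left,
      real_inner_smul_right, inner_zero_left, inner_zero_right,
      hχχ, hortho, hkχ, hχq, hkq, hqχ, hqk, hinχ, hink,
      mul_zero, zero_mul, add_zero, zero_add]
    ring
  set Qq : ℝ := ⟪L q, q⟫ with hQqdef
  set A : ℝ := lam * α ^ 2 * nχ with hAdef
  have hQqA : Qq < A := by rw [hψen] at hψ; linarith
  have hA : 0 < A := lt_of_le_of_lt hQqnn hQqA
  -- the constant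
  set ε : ℝ := 1 - Qq / A with hεdef
  set K : ℝ := 1 + Qq * ‖L‖ / (A * lam) with hKdef
  have hε : 0 < ε := by
    have : Qq / A < 1 := (div_lt_one hA).2 hQqA
    rw [hεdef]; linarith
  have hK : 0 < K := by
    have h0 : 0 ≤ Qq * ‖L‖ / (A * lam) :=
      div_nonneg (mul_nonneg hQqnn (norm_nonneg _)) (mul_pos hA hlam).le
    rw [hKdef]; linarith
  refine ⟨ε * δ / K, div_pos (mul_pos hε hδ) hK, ?_⟩
  intro m hmk hLψm
  -- decompose m
  set a : ℝ := ⟪m, χ⟫ / nχ with hadef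
  set p : H := m - a • χ with hpdef
  have hpχ : ⟪p, χ⟫ = 0 := by
    simp only [hpdef, inner_sub_left, real_inner_smul_left, hχχ]
    rw [hadef]
    field_simp
    ring
  have hpk : ⟪p, k⟫ = 0 := by
    simp only [hpdef, inner_sub_left, real_inner_smul_left, hortho, hmk, mul_zero]
    ring
  have hχp : ⟪χ, p⟫ = 0 := by rw [real_inner_comm]; exact hpχ
  have hmdec : m = a • χ + p := by rw [hpdef]; abel
  have hQpg : ⟪L p, p⟫ ≥ δ * ‖p‖ ^ 2 := hgap p hpχ hpk
  have hQpnn : (0:ℝ) ≤ ⟪L p, p⟫ := le_trans (by positivity) hQpg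
  -- energy of m
  have hmen : ⟪L m, m⟫ = -(lam * a ^ 2 * nχ) + ⟪L p, p⟫ := by
    conv_lhs => rw [hmdec]
    simp only [map_add, map_smul, hχeig, smul_smul,
      inner_add_left, inner_add_right, real_inner_smul_left,
      real_inner_smul_right, hχχ, hχp, hpχ, hinχ,
      mul_zero, zero_mul, add_zero, zero_add]
    ring
  -- the constraint
  have hcon : lam * α * a * nχ = ⟪L q, p⟫ := by
    have hc : ⟪L ψ, m⟫ = -(lam * α * a * nχ) + ⟪L q, p⟫ := by
      conv_lhs => rw [hψdec, hmdec]
      simp only [map_add, map_smul, hχeig, hk0, smul_zero, smul_smul,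
        inner_add_left, inner_add_right, real_inner_smul_left,
        real_inner_smul_right, inner_zero_left, inner_zero_right,
        hχχ, hortho, hkχ, hχq, hkq, hqχ, hqk, hinχ, hink, hχp, hpχ,
        mul_zero, zero_mul, add_zero, zero_add]
      ring
    rw [hLψm] at hc; linarith
  -- Cauchy–Schwarz for the bilinear form ⟪L·,·⟫ on the orthogonal complement
  have hCS : ⟪L q, p⟫ ^ 2 ≤ Qq * ⟪L p, p⟫ := by
    have hnonneg : ∀ t : ℝ,
        0 ≤ ⟪L q, q⟫ * (t * t) + (2 * ⟪L q, p⟫) * t + ⟪L p, p⟫ := by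
      intro t
      have h1 : ⟪p + t • q, χ⟫ = 0 := by
        rw [inner_add_left, real_inner_smul_left, hpχ, hqχ]; ring
      have h2 : ⟪p + t • q, k⟫ = 0 := by
        rw [inner_add_left, real_inner_smul_left, hpk, hqk]; ring
      have h3 := hgap _ h1 h2
      have hexp : ⟪L (p + t • q), p + t • q⟫
          = ⟪L q, q⟫ * (t * t) + (2 * ⟪L q, p⟫) * t + ⟪L p, p⟫ := by
        have hpq : ⟪L p, q⟫ = ⟪L q, p⟫ := by rw [hsym p q, real_inner_comm]
        simp only [map_add, map_smul, inner_add_left, inner_add_right,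
          real_inner_smul_left, real_inner_smul_right, hpq]
        ring
      have h4 : (0:ℝ) ≤ δ * ‖p + t • q‖ ^ 2 := by positivity
      linarith [hexp ▸ h3]
    have hd := discrim_le_zero hnonneg
    rw [discrim] at hd
    rw [hQqdef]
    linarith [hd]
  have hkey : A * (lam * a ^ 2 * nχ) ≤ Qq * ⟪L p, p⟫ := by
    calc A * (lam * a ^ 2 * nχ) = (lam * α * a * nχ) ^ 2 := by
          rw [hAdef]; ring
      _ = ⟪L q, p⟫ ^ 2 := by rw [hcon]
      _ ≤ Qq * ⟪L p, p⟫ := hCS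
  -- upper bound on the quadratic form
  have hQpub : ⟪L p, p⟫ ≤ ‖L‖ * ‖p‖ ^ 2 := by
    calc ⟪L p, p⟫ ≤ ‖L p‖ * ‖p‖ := real_inner_le_norm _ _
      _ ≤ (‖L‖ * ‖p‖) * ‖p‖ :=
          mul_le_mul_of_nonneg_right (L.le_opNorm p) (norm_nonneg p)
      _ = ‖L‖ * ‖p‖ ^ 2 := by ring
  -- Pythagoras
  have hpyth : ‖m‖ ^ 2 = a ^ 2 * nχ + ‖p‖ ^ 2 := by
    rw [hmdec, norm_add_sq_real, real_inner_smul_left, hχp, norm_smul]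
    simp only [mul_pow, Real.norm_eq_abs, sq_abs, mul_zero]
    rw [hnχdef]; ring
  -- assemble
  have hsnn : (0:ℝ) ≤ lam * a ^ 2 * nχ :=
    mul_nonneg (mul_nonneg hlam.le (sq_nonneg a)) hnχ.le
  have hs1 : lam * a ^ 2 * nχ ≤ Qq / A * ⟪L p, p⟫ := by
    rw [div_mul_eq_mul_div, le_div_iff₀ hA]
    linarith [hkey, mul_comm A (lam * a ^ 2 * nχ)]
  have hen : ⟪L m, m⟫ ≥ ε * ⟪L p, p⟫ := by
    rw [hmen, hεdef]
    have he : (1 - Qq / A) * ⟪L p, p⟫ = ⟪L p, p⟫ - Qq / A * ⟪L p, p⟫ := by ring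
    rw [he]
    linarith [hs1]
  have hmub : ‖m‖ ^ 2 ≤ K * ‖p‖ ^ 2 := by
    have h2 : lam * a ^ 2 * nχ ≤ Qq / A * (‖L‖ * ‖p‖ ^ 2) :=
      le_trans hs1 (mul_le_mul_of_nonneg_left hQpub (div_nonneg hQqnn hA.le))
    have heq : Qq * ‖L‖ / (A * lam) * ‖p‖ ^ 2 * lam = Qq / A * (‖L‖ * ‖p‖ ^ 2) := by
      field_simp
    have h3 : a ^ 2 * nχ ≤ Qq * ‖L‖ / (A * lam) * ‖p‖ ^ 2 := by
      rw [← mul_le_mul_iff_of_pos_right hlam, heq]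
      calc a ^ 2 * nχ * lam = lam * a ^ 2 * nχ := by ring
        _ ≤ Qq / A * (‖L‖ * ‖p‖ ^ 2) := h2
    rw [hpyth, hKdef]
    linarith
  calc ⟪L m, m⟫ ≥ ε * ⟪L p, p⟫ := hen
    _ ≥ ε * (δ * ‖p‖ ^ 2) := mul_le_mul_of_nonneg_left hQpg hε.le
    _ = ε * δ / K * (K * ‖p‖ ^ 2) := by field_simp
    _ ≥ ε * δ / K * ‖m‖ ^ 2 :=
        mul_le_mul_of_nonneg_left hmub (div_pos (mul_pos hε hδ) hK).le
end
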